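/- Let E : (0, a*) → ℝ and suppose there exist constants 0 < m ≤ M and p > 0 such that m (a* − a)^(p/(p+2)) ≤ E(a) ≤ M (a* − a)^(p/(p+2)) for all a close to a*. Suppose further that ρ : (0, a*) → ℝ≥0 satisfies E(b) ≤ E(a) + (a − b) ρ(a) for all 0 < b < a < a*. Then there exists L > 0 such that ρ(a) ≥ L (a* − a)^(−2/(p+2)) for all a sufficiently close to a*. -/

import Mathlib

/-- Lower bound on `ρ(a) = ∫ ρ_{γ_a}^{5/3}` near `a*`: if
`m (a*−a)^(p/(p+2)) ≤ E(a) ≤ M (a*−a)^(p/(p+2))` near `a*` and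
`E(b) ≤ E(a) + (a−b) ρ(a)` for `0 < b < a < a*`, then
`ρ(a) ≥ L (a*−a)^(−2/(p+2))` near `a*`. -/
theorem stmt_5 (astar p m M : ℝ) (E ρ : ℝ → ℝ)
    (hastar : 0 < astar) (hp : 0 < p) (hm : 0 < m) (hmM : m ≤ M)
    (hρ0 : ∀ a, 0 < a → a < astar → 0 ≤ ρ a)
    (hbound : ∃ ε > 0, ∀ a, astar - ε < a → a < astar →
      m * (astar - a) ^ (p / (p + 2)) ≤ E a ∧ E a ≤ M * (astar - a) ^ (p / (p + 2)))
    (htrial : ∀ a b, 0 < b → b < a → a < astar → E b ≤ E a + (a - b) * ρ a) :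
    ∃ L > 0, ∃ ε' > 0, ∀ a, astar - ε' < a → a < astar →
      ρ a ≥ L * (astar - a) ^ (-(2 : ℝ) / (p + 2)) := by
  obtain ⟨ε, hε, hb⟩ := hbound
  set α : ℝ := p / (p + 2) with hα
  have hp2 : (0:ℝ) < p + 2 := by linarith
  have hα0 : 0 < α := div_pos hp hp2
  have hratio : (1:ℝ) < (M + m) / m := by
    rw [lt_div_iff₀ hm]; linarith
  set c : ℝ := ((M + m) / m) ^ (1 / α) with hc
  have hc1 : (1:ℝ) < c := (Real.one_lt_rpow_iff_of_pos (by positivity)).mpr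
    (Or.inl ⟨hratio, by positivity⟩)
  set δ : ℝ := c - 1 with hδ
  have hδ0 : 0 < δ := by simp [hδ]; linarith
  have hcpow : c ^ α = (M + m) / m := by
    rw [hc, ← Real.rpow_mul (le_of_lt (by positivity : (0:ℝ) < (M+m)/m))]
    rw [one_div, inv_mul_cancel₀ (ne_of_gt hα0), Real.rpow_one]
  refine ⟨m / δ, by positivity, min ε astar / c, by positivity, ?_⟩
  intro a ha1 ha2
  set s : ℝ := astar - a with hs
  have hs0 : 0 < s := by simp [hs]; linarith
  have hsc : c * s < min ε astar := by
    have : s < min ε astar / c := by simp [hs]; linarith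
    calc c * s < c * (min ε astar / c) := by
          exact mul_lt_mul_of_pos_left this (by linarith)
      _ = min ε astar := by field_simp
  have hsε : c * s < ε := lt_of_lt_of_le hsc (min_le_left _ _)
  have hsastar : c * s < astar := lt_of_lt_of_le hsc (min_le_right _ _)
  set b : ℝ := a - δ * s with hbdef
  have hb0 : 0 < b := by
    have : b = astar - c * s := by rw [hbdef, hδ, hs]; ring
    rw [this]; linarith
  have hba : b < a := by
    have : 0 < δ * s := mul_pos hδ0 hs0
    simp [hbdef]; linarith
  have hbastar : astar - b = c * s := by rw [hbdef, hδ, hs]; ring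
  have h1 := hb b (by linarith) (by linarith)
  have h2 := hb a (by nlinarith) ha2
  rw [← hs] at h2
  have h3 := htrial a b hb0 hba ha2
  -- m * (c*s)^α ≤ E b ≤ E a + δ s ρ a ≤ M s^α + δ s ρ a
  have hlow : m * (c * s) ^ α ≤ M * s ^ α + δ * s * ρ a := by
    have := h1.1
    rw [hbastar] at this
    have h4 : a - b = δ * s := by rw [hbdef]; ring
    rw [h4] at h3
    calc m * (c * s) ^ α ≤ E b := this
      _ ≤ E a + δ * s * ρ a := h3
      _ ≤ M * s ^ α + δ * s * ρ a := by linarith [h2.2]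
  have hmul : (c * s) ^ α = ((M + m) / m) * s ^ α := by
    rw [Real.mul_rpow (by linarith) hs0.le, hcpow]
  rw [hmul] at hlow
  have hkey : m * s ^ α ≤ δ * s * ρ a := by
    have : m * (((M + m) / m) * s ^ α) = M * s ^ α + m * s ^ α := by
      field_simp
    rw [this] at hlow; linarith
  have hpow : s ^ (-(2:ℝ) / (p + 2)) = s ^ α / s := by
    have : (-(2:ℝ)) / (p + 2) = α - 1 := by
      rw [hα]; field_simp; ring
    rw [this, Real.rpow_sub hs0, Real.rpow_one]
  rw [ge_iff_le, hpow]
  have heq : m / δ * (s ^ α / s) = m * s ^ α / (δ * s) := by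
    field_simp
  rw [heq, div_le_iff₀ (mul_pos hδ0 hs0)]
  calc m * s ^ α ≤ δ * s * ρ a := hkey
    _ = ρ a * (δ * s) := by ring
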